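/- Given any increasing admissible fixation vector F (0 = F_0 < F_1 < ... < F_N = 1), the vector p defined by p_i = i(F_i − F_{i−1}) / [ i(F_i − F_{i−1}) + (N−i)(F_{i+1} − F_i) ] for i=1,...,N−1 satisfies 0 < p_i < 1 and is the unique type selection probability vector such that the corresponding Moran process has fixation vector F. -/

import Mathlib

open Finset

/-- The Moran transition matrix associated to a type selection probability vector `p`. -/
noncomputable def moran (N : ℕ) (p : Fin (N+1) → ℝ) :
    Matrix (Fin (N+1)) (Fin (N+1)) ℝ :=
  fun i j =>
    if (j : ℕ) + 1 = (i : ℕ) then ((i : ℕ) : ℝ) / N * (1 - p i)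
    else if (i : ℕ) + 1 = (j : ℕ) then ((N : ℝ) - ((i : ℕ) : ℝ)) / N * p i
    else if i = j then
      1 - ((i : ℕ) : ℝ) / N * (1 - p i) - ((N : ℝ) - ((i : ℕ) : ℝ)) / N * p i
    else 0


lemma pair_sum {M : ℕ} (g : Fin M → ℝ) (a b : Fin M) (hab : a ≠ b)
    (h0 : ∀ j, j ≠ a → j ≠ b → g j = 0) : ∑ j, g j = g a + g b := by
  have h1 : ∑ j ∈ ({a, b} : Finset (Fin M)), g j = ∑ j, g j :=
    Finset.sum_subset (Finset.subset_univ _) (fun x _ hx => by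
      simp only [Finset.mem_insert, Finset.mem_singleton] at hx
      push_neg at hx
      exact h0 x hx.1 hx.2)
  rw [← h1, Finset.sum_pair hab]

lemma tri_sum {M : ℕ} (g : Fin M → ℝ) (a b c : Fin M) (hab : a ≠ b) (hac : a ≠ c)
    (hbc : b ≠ c) (h0 : ∀ j, j ≠ a → j ≠ b → j ≠ c → g j = 0) :
    ∑ j, g j = g a + g b + g c := by
  have h1 : ∑ j ∈ ({a, b, c} : Finset (Fin M)), g j = ∑ j, g j :=
    Finset.sum_subset (Finset.subset_univ _) (fun x _ hx => by
      simp only [Finset.mem_insert, Finset.mem_singleton] at hx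
      push_neg at hx
      exact h0 x hx.1 hx.2.1 hx.2.2)
  rw [← h1, Finset.sum_insert (by simp [hab, hac]), Finset.sum_pair hbc, ← add_assoc]

lemma moran_row_mid (N : ℕ) (q F : Fin (N+1) → ℝ) (i : Fin (N+1))
    (h1 : 0 < (i:ℕ)) (h2 : (i:ℕ) < N) :
    (moran N q).mulVec F i =
      ((i:ℕ) : ℝ)/N * (1 - q i) * F ⟨(i:ℕ)-1, Nat.lt_succ_of_lt (Nat.lt_of_le_of_lt (Nat.sub_le _ _) h2)⟩
      + (1 - ((i:ℕ) : ℝ)/N * (1 - q i) - ((N:ℝ) - ((i:ℕ) : ℝ))/N * q i) * F i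
      + ((N:ℝ) - ((i:ℕ) : ℝ))/N * q i * F ⟨(i:ℕ)+1, Nat.succ_lt_succ h2⟩ := by
  have ha : (moran N q) i ⟨(i:ℕ)-1, by omega⟩ = ((i:ℕ) : ℝ)/N * (1 - q i) := by
    simp only [moran]
    rw [if_pos (show (i:ℕ)-1+1 = (i:ℕ) by omega)]
  have hb : (moran N q) i i =
      1 - ((i:ℕ) : ℝ)/N * (1 - q i) - ((N:ℝ) - ((i:ℕ) : ℝ))/N * q i := by
    simp only [moran]
    rw [if_neg (show ¬((i:ℕ)+1 = (i:ℕ)) by omega),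
      if_neg (show ¬((i:ℕ)+1 = (i:ℕ)) by omega)]
    exact if_pos trivial
  have hc : (moran N q) i ⟨(i:ℕ)+1, by omega⟩ = ((N:ℝ) - ((i:ℕ) : ℝ))/N * q i := by
    simp only [moran]
    rw [if_neg (show ¬((i:ℕ)+1+1 = (i:ℕ)) by omega),
      ]
    exact if_pos trivial
  have hd := tri_sum (fun j => moran N q i j * F j) ⟨(i:ℕ)-1, by omega⟩ i ⟨(i:ℕ)+1, by omega⟩
    (by simp only [ne_eq, Fin.ext_iff]; omega)
    (by simp only [ne_eq, Fin.ext_iff]; omega)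
    (by simp only [ne_eq, Fin.ext_iff]; omega)
    (fun j hja hjb hjc => by
      simp only [ne_eq, Fin.ext_iff, Fin.val_mk] at hja hjb hjc
      simp only [moran]
      rw [if_neg (show ¬((j:ℕ)+1 = (i:ℕ)) by omega),
        if_neg (show ¬((i:ℕ)+1 = (j:ℕ)) by omega),
        if_neg (show ¬(i = j) by simp only [Fin.ext_iff]; omega)]
      ring)
  beta_reduce at hd
  show ∑ j, moran N q i j * F j = _
  rw [hd, ha, hb, hc]

lemma moran_row_zero (N : ℕ) (hN : 1 ≤ N) (q F : Fin (N+1) → ℝ)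
    (hq0 : q 0 = 0) (hF0 : F 0 = 0) :
    (moran N q).mulVec F 0 = 0 := by
  have hd := pair_sum (fun j => moran N q 0 j * F j) 0 ⟨1, by omega⟩
    (by simp only [ne_eq, Fin.ext_iff, Fin.val_mk, Fin.val_zero]; omega)
    (fun j hja hjb => by
      simp only [ne_eq, Fin.ext_iff, Fin.val_mk, Fin.val_zero] at hja hjb
      simp only [moran]
      rw [if_neg (show ¬((j:ℕ)+1 = ((0:Fin (N+1)):ℕ)) by simp only [Fin.val_zero]; omega),
        if_neg (show ¬(((0:Fin (N+1)):ℕ)+1 = (j:ℕ)) by simp only [Fin.val_zero]; omega),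
        if_neg (show ¬((0:Fin (N+1)) = j) by simp only [Fin.ext_iff, Fin.val_zero]; omega)]
      ring)
  beta_reduce at hd
  show ∑ j, moran N q 0 j * F j = 0
  rw [hd]
  simp only [moran, Fin.val_zero, Fin.val_mk]
  norm_num [hq0, hF0]

lemma moran_row_last (N : ℕ) (hN : 1 ≤ N) (q F : Fin (N+1) → ℝ)
    (hqN : q (Fin.last N) = 1) (hFN : F (Fin.last N) = 1) :
    (moran N q).mulVec F (Fin.last N) = 1 := by
  have hd := pair_sum (fun j => moran N q (Fin.last N) j * F j) ⟨N-1, by omega⟩ (Fin.last N)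
    (by simp only [ne_eq, Fin.ext_iff, Fin.val_mk, Fin.val_last]; omega)
    (fun j hja hjb => by
      simp only [ne_eq, Fin.ext_iff, Fin.val_mk, Fin.val_last] at hja hjb
      simp only [moran, Fin.val_last]
      have hj : (j:ℕ) < N + 1 := j.isLt
      rw [if_neg (show ¬((j:ℕ)+1 = N) by omega),
        if_neg (show ¬(N+1 = (j:ℕ)) by omega),
        if_neg (show ¬(Fin.last N = j) by simp only [Fin.ext_iff, Fin.val_last]; omega)]
      ring)
  beta_reduce at hd
  show ∑ j, moran N q (Fin.last N) j * F j = 1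
  rw [hd]
  simp only [moran, Fin.val_last, Fin.val_mk]
  rw [if_pos (show N-1+1 = N by omega),
    if_neg (show ¬(N+1 = N) by omega), if_neg (show ¬(N+1 = N) by omega)]
  rw [if_pos trivial]
  rw [hqN, hFN]
  ring

theorem stmt9 (N : ℕ) (hN : 1 ≤ N) (F : Fin (N+1) → ℝ)
    (hF0 : F 0 = 0) (hFN : F (Fin.last N) = 1) (hmono : StrictMono F)
    (p : Fin (N+1) → ℝ)
    (hp0 : p 0 = 0) (hpN : p (Fin.last N) = 1)
    (hpdef : ∀ i : Fin (N+1), (h1 : 0 < (i : ℕ)) → (h2 : (i : ℕ) < N) →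
      p i = ((i : ℕ) : ℝ) * (F i - F ⟨(i : ℕ) - 1, by omega⟩) /
        (((i : ℕ) : ℝ) * (F i - F ⟨(i : ℕ) - 1, by omega⟩) +
          ((N : ℝ) - ((i : ℕ) : ℝ)) * (F ⟨(i : ℕ) + 1, by omega⟩ - F i))) :
    (∀ i : Fin (N+1), 0 < (i : ℕ) → (i : ℕ) < N → 0 < p i ∧ p i < 1) ∧
    (moran N p).mulVec F = F ∧
    (∀ q : Fin (N+1) → ℝ, q 0 = 0 → q (Fin.last N) = 1 →
      (moran N q).mulVec F = F → q = p) := by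
  have hN0 : ((N:ℕ) : ℝ) ≠ 0 := Nat.cast_ne_zero.mpr (by omega)
  -- key positivity facts at middle sites
  have hnum : ∀ i : Fin (N+1), (h1 : 0 < (i:ℕ)) → (h2 : (i:ℕ) < N) →
      0 < ((i:ℕ) : ℝ) * (F i - F ⟨(i:ℕ)-1, by omega⟩) := by
    intro i h1 h2
    apply mul_pos (by exact_mod_cast h1)
    have : (⟨(i:ℕ)-1, by omega⟩ : Fin (N+1)) < i := by
      simp only [Fin.lt_def, Fin.val_mk]; omega
    linarith [hmono this]
  have hnum2 : ∀ i : Fin (N+1), (h1 : 0 < (i:ℕ)) → (h2 : (i:ℕ) < N) →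
      0 < ((N:ℝ) - ((i:ℕ) : ℝ)) * (F ⟨(i:ℕ)+1, by omega⟩ - F i) := by
    intro i h1 h2
    apply mul_pos
    · have : ((i:ℕ) : ℝ) < (N : ℝ) := by exact_mod_cast h2
      linarith
    · have : i < (⟨(i:ℕ)+1, by omega⟩ : Fin (N+1)) := by
        simp only [Fin.lt_def, Fin.val_mk]; omega
      linarith [hmono this]
  have hDpos : ∀ i : Fin (N+1), (h1 : 0 < (i:ℕ)) → (h2 : (i:ℕ) < N) →
      0 < ((i:ℕ) : ℝ) * (F i - F ⟨(i:ℕ)-1, by omega⟩) +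
        ((N:ℝ) - ((i:ℕ) : ℝ)) * (F ⟨(i:ℕ)+1, by omega⟩ - F i) := by
    intro i h1 h2
    linarith [hnum i h1 h2, hnum2 i h1 h2]
  refine ⟨?_, ?_, ?_⟩
  · intro i h1 h2
    rw [hpdef i h1 h2]
    constructor
    · exact div_pos (hnum i h1 h2) (hDpos i h1 h2)
    · rw [div_lt_one (hDpos i h1 h2)]
      linarith [hnum2 i h1 h2]
  · funext i
    by_cases hi0 : (i:ℕ) = 0
    · have : i = 0 := by simp [Fin.ext_iff, hi0]
      subst this
      rw [moran_row_zero N hN p F hp0 hF0, hF0]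
    by_cases hiN : (i:ℕ) = N
    · have : i = Fin.last N := by simp [Fin.ext_iff, hiN]
      subst this
      rw [moran_row_last N hN p F hpN hFN, hFN]
    have h1 : 0 < (i:ℕ) := by omega
    have h2 : (i:ℕ) < N := by omega
    rw [moran_row_mid N p F i h1 h2, hpdef i h1 h2]
    have hD := hDpos i h1 h2
    field_simp
    ring
  · intro q hq0 hqN hmul
    funext i
    by_cases hi0 : (i:ℕ) = 0
    · have : i = 0 := by simp [Fin.ext_iff, hi0]
      subst this; rw [hq0, hp0]
    by_cases hiN : (i:ℕ) = N
    · have : i = Fin.last N := by simp [Fin.ext_iff, hiN]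
      subst this; rw [hqN, hpN]
    have h1 : 0 < (i:ℕ) := by omega
    have h2 : (i:ℕ) < N := by omega
    have hrow := congrFun hmul i
    rw [moran_row_mid N q F i h1 h2] at hrow
    have hD := hDpos i h1 h2
    have hD' : ((i:ℕ) : ℝ) * (F i - F ⟨(i:ℕ)-1, by omega⟩) +
        ((N:ℝ) - ((i:ℕ) : ℝ)) * (F ⟨(i:ℕ)+1, by omega⟩ - F i) ≠ 0 := ne_of_gt hD
    rw [hpdef i h1 h2, eq_div_iff hD']
    have hNN : ((N:ℕ):ℝ) * (((N:ℕ):ℝ))⁻¹ = 1 := mul_inv_cancel₀ hN0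
    linear_combination ((N:ℕ):ℝ) * hrow + ((((i:ℕ):ℝ) * (1 - q i) * F ⟨(i:ℕ)-1, by omega⟩ +
      (- ((i:ℕ):ℝ) * (1 - q i) - ((N:ℝ) - ((i:ℕ):ℝ)) * q i) * F i +
      ((N:ℝ) - ((i:ℕ):ℝ)) * q i * F ⟨(i:ℕ)+1, by omega⟩)) * (1 - hNN)
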